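/- If λ > 0, γ > 0 and m ≤ q, then the zero solution is unstable: there exist ε > 0 and t1 ≥ t0 such that for every δ ∈ (0,ε), every admissible solution with v(t1) = δ satisfies v(t) ≥ ε for some t ≥ t1. -/
import Mathlib


/-- An admissible solution of the reduced equation
`v'(t) = γ·t^{−m/q}·v(t)^s + λ·t^{−n/q}·v(t) + ρ(t)` on `[t0,∞)` with values in
`[0,d0]`, where `|ρ(t)| ≤ M·(t^{−m/q}·v(t)^s + t^{−n/q}·v(t))·(v(t) + t^{−1/q})`. -/
def IsAdmissible (q m n s : ℕ) (γ lam d0 t0 M : ℝ) (v : ℝ → ℝ) : Prop :=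
  (∀ t ≥ t0, v t ∈ Set.Icc (0:ℝ) d0) ∧
  ∃ ρ : ℝ → ℝ,
    (∀ t ≥ t0, |ρ t| ≤
      M * (t ^ (-(m:ℝ)/(q:ℝ)) * v t ^ s + t ^ (-(n:ℝ)/(q:ℝ)) * v t)
        * (v t + t ^ (-(1:ℝ)/(q:ℝ)))) ∧
    (∀ t ≥ t0, HasDerivAt v
      (γ * t ^ (-(m:ℝ)/(q:ℝ)) * v t ^ s + lam * t ^ (-(n:ℝ)/(q:ℝ)) * v t + ρ t) t)

set_option maxHeartbeats 1000000 in
/-- if `λ > 0`, `γ > 0` and `m ≤ q` the zero solution is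
unstable. -/
theorem instability_of_zero_nonlinear_case
    (q m n s : ℕ) (hq : 0 < q) (hm : 0 < m) (hmn : m < n) (hs : 2 ≤ s) (hmq : m ≤ q)
    (γ lam d0 t0 M : ℝ) (hγ : 0 < γ) (hlam : 0 < lam)
    (hd0 : 0 < d0) (ht0 : 0 < t0) (hM : 0 < M) :
    ∃ ε > 0, ∃ t1 ≥ t0, ∀ δ ∈ Set.Ioo (0:ℝ) ε,
      ∀ v : ℝ → ℝ, IsAdmissible q m n s γ lam d0 t0 M v → v t1 = δ →
        ∃ t ≥ t1, ε ≤ v t := by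
  set L := min γ lam with hLdef
  have hL0 : 0 < L := lt_min hγ hlam
  set ε := L / (4 * M) with hεdef
  have hε : 0 < ε := by
    rw [hεdef]; positivity
  set t1 := max (max t0 1) (ε⁻¹ ^ q) with ht1def
  have ht1_t0 : t0 ≤ t1 := le_trans (le_max_left t0 1) (le_max_left _ _)
  have ht1_1 : (1:ℝ) ≤ t1 := le_trans (le_max_right t0 1) (le_max_left _ _)
  have ht1_0 : (0:ℝ) < t1 := lt_of_lt_of_le one_pos ht1_1
  refine ⟨ε, hε, t1, ht1_t0, ?_⟩
  rintro δ ⟨hδ0, hδε⟩ v ⟨hrange, ρ, hρ, hderiv⟩ hv1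
  by_contra hcon
  push_neg at hcon
  -- hcon : ∀ t ≥ t1, v t < ε
  have hq' : ((q:ℝ)) ≠ 0 := Nat.cast_ne_zero.mpr hq.ne'
  -- key derivative lower bound
  have hkey : ∀ t, t1 ≤ t →
      L / 2 * (t⁻¹ * v t ^ s) ≤
        γ * t ^ (-(m:ℝ)/(q:ℝ)) * v t ^ s + lam * t ^ (-(n:ℝ)/(q:ℝ)) * v t + ρ t := by
    intro t ht
    have htpos : 0 < t := lt_of_lt_of_le ht1_0 ht
    have ht0t : t0 ≤ t := le_trans ht1_t0 ht
    have h1t : (1:ℝ) ≤ t := le_trans ht1_1 ht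
    obtain ⟨hu0, hud⟩ := hrange t ht0t
    have huε : v t < ε := hcon t ht
    set a := t ^ (-(m:ℝ)/(q:ℝ)) with ha
    set b := t ^ (-(n:ℝ)/(q:ℝ)) with hb
    have ha0 : 0 ≤ a := Real.rpow_nonneg htpos.le _
    have hb0 : 0 ≤ b := Real.rpow_nonneg htpos.le _
    have hus : 0 ≤ v t ^ s := pow_nonneg hu0 s
    have hA0 : 0 ≤ a * v t ^ s + b * v t :=
      add_nonneg (mul_nonneg ha0 hus) (mul_nonneg hb0 hu0)
    have hta : t⁻¹ ≤ a := by
      have hm1 : (-1:ℝ) ≤ -(m:ℝ)/(q:ℝ) := by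
        rw [neg_div]
        apply neg_le_neg
        rw [div_le_one (by exact_mod_cast hq)]
        exact_mod_cast hmq
      calc t⁻¹ = t ^ (-1:ℝ) := (Real.rpow_neg_one t).symm
        _ ≤ a := Real.rpow_le_rpow_of_exponent_le h1t hm1
    have hsm : t ^ (-(1:ℝ)/(q:ℝ)) ≤ ε := by
      have h2 : ε⁻¹ ≤ t ^ ((1:ℝ)/(q:ℝ)) := by
        have he : ((ε⁻¹ ^ q : ℝ)) ^ ((1:ℝ)/(q:ℝ)) = ε⁻¹ := by
          rw [← Real.rpow_natCast ε⁻¹ q, ← Real.rpow_mul (inv_pos.mpr hε).le,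
            mul_one_div, div_self hq', Real.rpow_one]
        rw [← he]
        exact Real.rpow_le_rpow (by positivity) (le_trans (le_max_right _ _) ht)
          (by positivity)
      have h3 : (t ^ ((1:ℝ)/(q:ℝ)))⁻¹ ≤ ε := by
        rw [← inv_inv ε]
        exact inv_anti₀ (inv_pos.mpr hε) h2
      rw [neg_div, Real.rpow_neg htpos.le]
      exact h3
    have hρt := hρ t ht0t
    have hsum : v t + t ^ (-(1:ℝ)/(q:ℝ)) ≤ 2 * ε := by linarith
    have hM0 : (M:ℝ) ≠ 0 := ne_of_gt hM
    have h2 : M * (2 * ε) = L / 2 := by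
      rw [hεdef]; field_simp; ring
    have habs : |ρ t| ≤ L / 2 * (a * v t ^ s + b * v t) := by
      calc |ρ t| ≤ M * (a * v t ^ s + b * v t) * (v t + t ^ (-(1:ℝ)/(q:ℝ))) := hρt
        _ ≤ M * (a * v t ^ s + b * v t) * (2 * ε) :=
            mul_le_mul_of_nonneg_left hsum (mul_nonneg hM.le hA0)
        _ = M * (2 * ε) * (a * v t ^ s + b * v t) := by ring
        _ = L / 2 * (a * v t ^ s + b * v t) := by rw [h2]
    have hρlow : -(L / 2 * (a * v t ^ s + b * v t)) ≤ ρ t := by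
      have := neg_abs_le (ρ t); linarith
    have hγa : L * (a * v t ^ s) ≤ γ * a * v t ^ s := by
      have h := min_le_left γ lam
      have := mul_nonneg ha0 hus
      nlinarith
    have hlb : L * (b * v t) ≤ lam * b * v t := by
      have h := min_le_right γ lam
      have := mul_nonneg hb0 hu0
      nlinarith
    have hta' : L / 2 * (t⁻¹ * v t ^ s) ≤ L / 2 * (a * v t ^ s) := by
      apply mul_le_mul_of_nonneg_left _ (by linarith : (0:ℝ) ≤ L / 2)
      exact mul_le_mul_of_nonneg_right hta hus
    have hbv : 0 ≤ L / 2 * (b * v t) := mul_nonneg (by linarith) (mul_nonneg hb0 hu0)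
    linarith
  -- v is monotone on [t1, ∞)
  have hmono : MonotoneOn v (Set.Ici t1) := by
    apply monotoneOn_of_deriv_nonneg (convex_Ici t1)
    · intro t ht
      exact ((hderiv t (le_trans ht1_t0 ht)).continuousAt).continuousWithinAt
    · intro t ht
      rw [interior_Ici] at ht
      exact ((hderiv t (le_trans ht1_t0 ht.le)).differentiableAt).differentiableWithinAt
    · intro t ht
      rw [interior_Ici] at ht
      rw [(hderiv t (le_trans ht1_t0 ht.le)).deriv]
      have htpos : 0 < t := lt_of_lt_of_le ht1_0 ht.le
      have hu0 : 0 ≤ v t := (hrange t (le_trans ht1_t0 ht.le)).1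
      have h0 : 0 ≤ L / 2 * (t⁻¹ * v t ^ s) :=
        mul_nonneg (by linarith) (mul_nonneg (inv_nonneg.mpr htpos.le) (pow_nonneg hu0 s))
      linarith [hkey t ht.le]
  have hδv : ∀ t, t1 ≤ t → δ ≤ v t := by
    intro t ht
    have := hmono Set.self_mem_Ici (Set.mem_Ici.mpr ht) ht
    rw [hv1] at this
    exact this
  -- comparison function
  set K := L / 2 * δ ^ s with hKdef
  have hK : 0 < K := mul_pos (by linarith) (pow_pos hδ0 s)
  have hwd : ∀ t, t1 ≤ t → HasDerivAt (fun x => v x - K * Real.log x)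
      ((γ * t ^ (-(m:ℝ)/(q:ℝ)) * v t ^ s + lam * t ^ (-(n:ℝ)/(q:ℝ)) * v t + ρ t)
        - K * t⁻¹) t := by
    intro t ht
    have htpos : 0 < t := lt_of_lt_of_le ht1_0 ht
    exact (hderiv t (le_trans ht1_t0 ht)).sub
      ((Real.hasDerivAt_log (ne_of_gt htpos)).const_mul K)
  have hwmono : MonotoneOn (fun x => v x - K * Real.log x) (Set.Ici t1) := by
    apply monotoneOn_of_deriv_nonneg (convex_Ici t1)
    · intro t ht
      exact (hwd t ht).continuousAt.continuousWithinAt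
    · intro t ht
      rw [interior_Ici] at ht
      exact (hwd t ht.le).differentiableAt.differentiableWithinAt
    · intro t ht
      rw [interior_Ici] at ht
      rw [(hwd t ht.le).deriv]
      have htpos : 0 < t := lt_of_lt_of_le ht1_0 ht.le
      have hpow : δ ^ s ≤ v t ^ s := pow_le_pow_left₀ hδ0.le (hδv t ht.le) s
      have h1 : K * t⁻¹ ≤ L / 2 * (t⁻¹ * v t ^ s) := by
        calc K * t⁻¹ = L / 2 * (t⁻¹ * δ ^ s) := by rw [hKdef]; ring
          _ ≤ L / 2 * (t⁻¹ * v t ^ s) := by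
              apply mul_le_mul_of_nonneg_left _ (by linarith : (0:ℝ) ≤ L / 2)
              exact mul_le_mul_of_nonneg_left hpow (inv_nonneg.mpr htpos.le)
      linarith [hkey t ht.le]
  -- evaluate at a large time
  set T := t1 * Real.exp ((d0 + 1) / K) with hTdef
  have hdK : 0 ≤ (d0 + 1) / K := le_of_lt (div_pos (by linarith) hK)
  have hexp1 : (1:ℝ) ≤ Real.exp ((d0 + 1) / K) := by
    have := Real.add_one_le_exp ((d0 + 1) / K)
    linarith
  have hT1 : t1 ≤ T := by
    calc t1 = t1 * 1 := (mul_one t1).symm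
      _ ≤ T := by
          rw [hTdef]
          exact mul_le_mul_of_nonneg_left hexp1 ht1_0.le
  have hlogT : Real.log T = Real.log t1 + (d0 + 1) / K := by
    rw [hTdef, Real.log_mul (ne_of_gt ht1_0) (Real.exp_ne_zero _), Real.log_exp]
  have hw : v t1 - K * Real.log t1 ≤ v T - K * Real.log T :=
    hwmono Set.self_mem_Ici (Set.mem_Ici.mpr hT1) hT1
  rw [hv1, hlogT] at hw
  have hvT : v T ≤ d0 := (hrange T (le_trans ht1_t0 hT1)).2
  have hKc : K * (Real.log t1 + (d0 + 1) / K) = K * Real.log t1 + (d0 + 1) := by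
    rw [mul_add, mul_div_cancel₀ _ (ne_of_gt hK)]
  linarith
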